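/- For all ξ, ζ ∈ ℂ one has θ₄(ξ|τ/2)·θ₃(ζ|τ/2) − θ₃(ξ|τ/2)·θ₄(ζ|τ/2) = 2·θ₁(ξ+ζ|τ)·θ₁(ξ−ζ|τ). -/

import Mathlib

/-- Jacobi theta function `θ_a(z|τ)` for `a = 1,2,3,4`. -/
noncomputable def jTheta (a : ℕ) (z τ : ℂ) : ℂ :=
  match a with
  | 1 => -∑' k : ℤ, Complex.exp ((Real.pi : ℂ) * Complex.I * τ * ((k : ℂ) + 1/2)^2
          + 2 * (Real.pi : ℂ) * Complex.I * (z + 1/2) * ((k : ℂ) + 1/2))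
  | 2 => ∑' k : ℤ, Complex.exp ((Real.pi : ℂ) * Complex.I * τ * ((k : ℂ) + 1/2)^2
          + 2 * (Real.pi : ℂ) * Complex.I * z * ((k : ℂ) + 1/2))
  | 3 => ∑' k : ℤ, Complex.exp ((Real.pi : ℂ) * Complex.I * τ * (k : ℂ)^2
          + 2 * (Real.pi : ℂ) * Complex.I * z * (k : ℂ))
  | 4 => ∑' k : ℤ, Complex.exp ((Real.pi : ℂ) * Complex.I * τ * (k : ℂ)^2
          + 2 * (Real.pi : ℂ) * Complex.I * (z + 1/2) * (k : ℂ))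
  | _ => 0

open Complex

noncomputable def T3 (z τ : ℂ) (k : ℤ) : ℂ :=
  Complex.exp ((Real.pi : ℂ) * Complex.I * τ * (k : ℂ)^2
    + 2 * (Real.pi : ℂ) * Complex.I * z * (k : ℂ))

noncomputable def T1 (z τ : ℂ) (k : ℤ) : ℂ :=
  Complex.exp ((Real.pi : ℂ) * Complex.I * τ * ((k : ℂ) + 1/2)^2
    + 2 * (Real.pi : ℂ) * Complex.I * (z + 1/2) * ((k : ℂ) + 1/2))

lemma T3_eq (z τ : ℂ) : T3 z τ = fun k => jacobiTheta₂_term k z τ := by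
  funext k
  unfold T3 jacobiTheta₂_term
  ring_nf

lemma summable_norm_T3 {τ : ℂ} (hτ : 0 < τ.im) (z : ℂ) :
    Summable (fun k => ‖T3 z τ k‖) := by
  rw [T3_eq]
  exact summable_norm_iff.mpr ((summable_jacobiTheta₂_term_iff z τ).mpr hτ)

lemma T1_eq (z τ : ℂ) : T1 z τ = fun k =>
    Complex.exp ((Real.pi : ℂ) * Complex.I * τ / 4 + (Real.pi : ℂ) * Complex.I * (z + 1/2))
      * T3 (z + 1/2 + τ/2) τ k := by
  funext k
  unfold T1 T3
  rw [← Complex.exp_add]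
  congr 1
  ring

lemma summable_norm_T1 {τ : ℂ} (hτ : 0 < τ.im) (z : ℂ) :
    Summable (fun k => ‖T1 z τ k‖) := by
  rw [T1_eq]
  simpa only [norm_mul] using (summable_norm_T3 hτ (z + 1/2 + τ/2)).mul_left _

lemma T3_shift (z τ : ℂ) (k : ℤ) :
    T3 (z + 1/2) τ k = Complex.exp ((Real.pi : ℂ) * Complex.I * (k : ℂ)) * T3 z τ k := by
  unfold T3
  rw [← Complex.exp_add]
  congr 1
  ring

def eIdx : ℤ × ℤ → ℤ × ℤ := fun ab => (ab.1 + ab.2 + 1, ab.1 - ab.2)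

lemma eIdx_inj : Function.Injective eIdx := by
  intro x y h
  simp only [eIdx, Prod.mk.injEq] at h
  obtain ⟨h1, h2⟩ := h
  exact Prod.ext (by omega) (by omega)

lemma key_exp (Y X E : ℂ) (b : ℤ) (hX : X = Y + (2*(b:ℂ)+1)*((Real.pi:ℂ)*Complex.I))
    (hE : E = Y + (2*(b:ℂ)+1)*((Real.pi:ℂ)*Complex.I)) :
    Complex.exp X - Complex.exp Y = 2 * Complex.exp E := by
  have h : Complex.exp (Y + (2*(b:ℂ)+1)*((Real.pi:ℂ)*Complex.I)) = - Complex.exp Y := by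
    rw [show Y + (2*(b:ℂ)+1)*((Real.pi:ℂ)*Complex.I)
        = Y + (Real.pi:ℂ)*Complex.I + (b:ℂ)*(2*(Real.pi:ℂ)*Complex.I) by ring,
      Complex.exp_add, Complex.exp_add, Complex.exp_int_mul_two_pi_mul_I,
      Complex.exp_pi_mul_I]
    ring
  rw [hX, hE, h]
  ring


/-- For all `ξ, ζ ∈ ℂ`:
`θ₄(ξ|τ/2)·θ₃(ζ|τ/2) − θ₃(ξ|τ/2)·θ₄(ζ|τ/2) = 2·θ₁(ξ+ζ|τ)·θ₁(ξ−ζ|τ)`. -/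
theorem theta_half_period_product (τ : ℂ) (hτ : 0 < τ.im) (ξ ζ : ℂ) :
    jTheta 4 ξ (τ/2) * jTheta 3 ζ (τ/2) - jTheta 3 ξ (τ/2) * jTheta 4 ζ (τ/2)
      = 2 * jTheta 1 (ξ + ζ) τ * jTheta 1 (ξ - ζ) τ := by
  have hτ' : 0 < (τ/2).im := by
    have : (τ/2).im = τ.im / 2 := by
      simpa using Complex.div_ofReal_im τ 2
    rw [this]; linarith
  show (∑' k, T3 (ξ+1/2) (τ/2) k) * (∑' k, T3 ζ (τ/2) k)
      - (∑' k, T3 ξ (τ/2) k) * (∑' k, T3 (ζ+1/2) (τ/2) k)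
      = 2 * (-∑' k, T1 (ξ+ζ) τ k) * (-∑' k, T1 (ξ-ζ) τ k)

  set g : ℤ × ℤ → ℂ := fun p =>
    T3 (ξ+1/2) (τ/2) p.1 * T3 ζ (τ/2) p.2 - T3 ξ (τ/2) p.1 * T3 (ζ+1/2) (τ/2) p.2 with hg
  have gzero : ∀ p : ℤ × ℤ, Even (p.1 + p.2) → g p = 0 := by
    intro p hp
    obtain ⟨c, hc⟩ := hp
    have hm : ((p.1 : ℂ)) = (p.2 : ℂ) + 2*((c:ℂ) - (p.2:ℂ)) := by
      have h' : (p.1 : ℤ) = p.2 + 2*(c - p.2) := by omega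
      have := congrArg (fun x : ℤ => (x : ℂ)) h'
      push_cast at this
      exact this
    have he : Complex.exp ((Real.pi:ℂ)*Complex.I*(p.1:ℂ))
        = Complex.exp ((Real.pi:ℂ)*Complex.I*(p.2:ℂ)) := by
      have : Complex.exp ((Real.pi:ℂ)*Complex.I*(p.1:ℂ))
          = Complex.exp ((Real.pi:ℂ)*Complex.I*(p.2:ℂ) + ((c - p.2 : ℤ):ℂ)*(2*(Real.pi:ℂ)*Complex.I)) := by
        congr 1
        rw [hm]
        push_cast
        ring
      rw [this, Complex.exp_add, Complex.exp_int_mul_two_pi_mul_I, mul_one]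
    simp only [hg, T3_shift, he]
    ring
  have hsupp : Function.support g ⊆ Set.range eIdx := by
    intro p hp
    rcases Int.even_or_odd (p.1 + p.2) with he | ho
    · exact absurd (gzero p he) hp
    · obtain ⟨c, hc⟩ := ho
      refine ⟨(c, p.1 - c - 1), ?_⟩
      simp only [eIdx]
      exact Prod.ext (by omega) (by omega)
  have key : ∀ ab : ℤ × ℤ, g (eIdx ab) = 2 * (T1 (ξ+ζ) τ ab.1 * T1 (ξ-ζ) τ ab.2) := by
    rintro ⟨a, b⟩
    simp only [hg, eIdx]
    unfold T3 T1
    rw [← Complex.exp_add, ← Complex.exp_add, ← Complex.exp_add]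
    exact key_exp _ _ _ b (by push_cast; ring) (by push_cast; ring)
  have h34 := tsum_mul_tsum_of_summable_norm (summable_norm_T3 hτ' (ξ+1/2)) (summable_norm_T3 hτ' ζ)
  have h43 := tsum_mul_tsum_of_summable_norm (summable_norm_T3 hτ' ξ) (summable_norm_T3 hτ' (ζ+1/2))
  have h11 := tsum_mul_tsum_of_summable_norm (summable_norm_T1 hτ (ξ+ζ)) (summable_norm_T1 hτ (ξ-ζ))
  have hs1 := summable_mul_of_summable_norm (summable_norm_T3 hτ' (ξ+1/2)) (summable_norm_T3 hτ' ζ)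
  have hs2 := summable_mul_of_summable_norm (summable_norm_T3 hτ' ξ) (summable_norm_T3 hτ' (ζ+1/2))
  calc (∑' k, T3 (ξ+1/2) (τ/2) k) * (∑' k, T3 ζ (τ/2) k)
      - (∑' k, T3 ξ (τ/2) k) * (∑' k, T3 (ζ+1/2) (τ/2) k)
      = ∑' p : ℤ × ℤ, g p := by rw [h34, h43, ← Summable.tsum_sub hs1 hs2]
    _ = ∑' ab : ℤ × ℤ, g (eIdx ab) := (eIdx_inj.tsum_eq hsupp).symm
    _ = ∑' ab : ℤ × ℤ, 2 * (T1 (ξ+ζ) τ ab.1 * T1 (ξ-ζ) τ ab.2) := tsum_congr key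
    _ = 2 * ∑' ab : ℤ × ℤ, T1 (ξ+ζ) τ ab.1 * T1 (ξ-ζ) τ ab.2 := tsum_mul_left
    _ = 2 * (-∑' k, T1 (ξ+ζ) τ k) * (-∑' k, T1 (ξ-ζ) τ k) := by rw [← h11]; ring
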